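/- arXiv:math/0512530 — 2 statements merged into one kernel-verified Lean document; each statement's English description precedes it below -/
import Mathlib

section
/- Given the relations η² = 0, αη = 0, ημ^{g-1} = n(g-1)!, and the constraint that (μ + Nα + N²η)^g integrates to zero for all integers N, the top intersection numbers α^k μ^{g-k} are forced to be: α²μ^{g-2} = -2n(g-2)!, and α^k μ^{g-k} = 0 for all k ≠ 2 with 1 ≤ k ≤ g. -/
open MvPolynomial

noncomputable def mu : MvPolynomial (Fin 3) ℚ := X 0
noncomputable def al : MvPolynomial (Fin 3) ℚ := X 1
noncomputable def et : MvPolynomial (Fin 3) ℚ := X 2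

lemma key_eval (m n : ℕ)
    (I : MvPolynomial (Fin 3) ℚ →ₗ[ℚ] ℚ)
    (hrel_eta : ∀ p, I (et ^ 2 * p) = 0)
    (hrel_aleta : ∀ p, I (al * et * p) = 0)
    (h_eta_mu : I (et * mu ^ (m + 1)) = n * Nat.factorial (m + 1))
    (t : ℚ) :
    I ((mu + C t * al + C (t ^ 2) * et) ^ (m + 2))
      = (∑ k ∈ Finset.range (m + 3),
          ((m + 2).choose k : ℚ) * I (al ^ k * mu ^ (m + 2 - k)) * t ^ k)
        + ((m : ℚ) + 2) * (n * Nat.factorial (m + 1)) * t ^ 2 := by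
  have smulI : ∀ (r : ℚ) (p : MvPolynomial (Fin 3) ℚ), I (C r * p) = r * I p := by
    intro r p
    rw [← MvPolynomial.smul_eq_C_mul, map_smul, smul_eq_mul]
  have kill : ∀ (r : ℚ) (p : MvPolynomial (Fin 3) ℚ), I (C r * (et ^ 2 * p)) = 0 := by
    intro r p; rw [smulI, hrel_eta, mul_zero]
  have killae : ∀ (r : ℚ) (p : MvPolynomial (Fin 3) ℚ), I (C r * (al * et * p)) = 0 := by
    intro r p; rw [smulI, hrel_aleta, mul_zero]
  set A : MvPolynomial (Fin 3) ℚ := mu + C t * al with hA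
  have expand : (mu + C t * al + C (t ^ 2) * et) ^ (m + 2)
      = ∑ j ∈ Finset.range (m + 3),
          A ^ j * (C (t ^ 2) * et) ^ (m + 2 - j) * ((m + 2).choose j : MvPolynomial (Fin 3) ℚ) := by
    rw [add_pow]
  rw [expand, Finset.sum_range_succ, Finset.sum_range_succ, map_add, map_add]
  -- three parts
  have part0 : I (∑ j ∈ Finset.range (m + 1),
      A ^ j * (C (t ^ 2) * et) ^ (m + 2 - j) * ((m + 2).choose j : MvPolynomial (Fin 3) ℚ)) = 0 := by
    rw [map_sum]
    apply Finset.sum_eq_zero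
    intro j hj
    rw [Finset.mem_range] at hj
    have he : m + 2 - j = (m - j) + 2 := by omega
    have heq : A ^ j * (C (t ^ 2) * et) ^ (m + 2 - j) * ((m + 2).choose j : MvPolynomial (Fin 3) ℚ)
        = C ((t ^ 2) ^ (m + 2 - j)) * (et ^ 2 * (et ^ (m - j) * A ^ j * ((m + 2).choose j : MvPolynomial (Fin 3) ℚ))) := by
      simp only [he, map_mul, map_pow, map_natCast]
      ring
    rw [heq, kill]
  have hch1 : (m + 2).choose (m + 1) = m + 2 := Nat.choose_succ_self_right (m + 1)
  have part1 : I (A ^ (m + 1) * (C (t ^ 2) * et) ^ (m + 2 - (m + 1)) * ((m + 2).choose (m + 1) : MvPolynomial (Fin 3) ℚ))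
      = ((m : ℚ) + 2) * (n * Nat.factorial (m + 1)) * t ^ 2 := by
    have hs : m + 2 - (m + 1) = 1 := by omega
    rw [hs, hch1, pow_one]
    have hAexp : A ^ (m + 1) = ∑ i ∈ Finset.range (m + 2),
        (C t * al) ^ i * mu ^ (m + 1 - i) * ((m + 1).choose i : MvPolynomial (Fin 3) ℚ) := by
      rw [hA, add_comm mu, add_pow]
    rw [hAexp, Finset.sum_mul, Finset.sum_mul, map_sum, Finset.sum_range_succ']
    have hz : ∀ i ∈ Finset.range (m + 1),
        I ((C t * al) ^ (i + 1) * mu ^ (m + 1 - (i + 1)) * ((m + 1).choose (i + 1) : MvPolynomial (Fin 3) ℚ)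
            * (C (t ^ 2) * et) * ((m + 2 : ℕ) : MvPolynomial (Fin 3) ℚ)) = 0 := by
      intro i hi
      have heq : (C t * al) ^ (i + 1) * mu ^ (m + 1 - (i + 1)) * ((m + 1).choose (i + 1) : MvPolynomial (Fin 3) ℚ)
            * (C (t ^ 2) * et) * ((m + 2 : ℕ) : MvPolynomial (Fin 3) ℚ)
          = C (t ^ (i + 1) * t ^ 2 * ((m + 1).choose (i + 1) : ℚ) * ((m + 2 : ℕ) : ℚ))
            * (al * et * (al ^ i * mu ^ (m + 1 - (i + 1)))) := by
        simp only [map_mul, map_pow, map_natCast]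
        ring
      rw [heq, killae]
    rw [Finset.sum_eq_zero hz, zero_add]
    have heq0 : (C t * al) ^ 0 * mu ^ (m + 1 - 0) * ((m + 1).choose 0 : MvPolynomial (Fin 3) ℚ)
          * (C (t ^ 2) * et) * ((m + 2 : ℕ) : MvPolynomial (Fin 3) ℚ)
        = C (t ^ 2 * ((m + 2 : ℕ) : ℚ)) * (et * mu ^ (m + 1)) := by
      simp only [map_mul, map_pow, map_natCast]
      simp
      ring
    rw [heq0, smulI, h_eta_mu]
    push_cast
    ring
  have part2 : I (A ^ (m + 2) * (C (t ^ 2) * et) ^ (m + 2 - (m + 2)) * ((m + 2).choose (m + 2) : MvPolynomial (Fin 3) ℚ))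
      = ∑ k ∈ Finset.range (m + 3),
          ((m + 2).choose k : ℚ) * I (al ^ k * mu ^ (m + 2 - k)) * t ^ k := by
    simp only [Nat.sub_self, pow_zero, Nat.choose_self, Nat.cast_one, mul_one]
    have hAexp : A ^ (m + 2) = ∑ k ∈ Finset.range (m + 3),
        (C t * al) ^ k * mu ^ (m + 2 - k) * ((m + 2).choose k : MvPolynomial (Fin 3) ℚ) := by
      rw [hA, add_comm mu, add_pow]
    rw [hAexp, map_sum]
    apply Finset.sum_congr rfl
    intro k hk
    have heq : (C t * al) ^ k * mu ^ (m + 2 - k) * ((m + 2).choose k : MvPolynomial (Fin 3) ℚ)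
        = C (t ^ k * ((m + 2).choose k : ℚ)) * (al ^ k * mu ^ (m + 2 - k)) := by
      simp only [map_mul, map_pow, map_natCast]
      ring
    rw [heq, smulI]
    ring
  rw [part0, part1, part2]
  ring

/-- Given η² = 0, αη = 0 (under the integration), ∫(ημ^{g-1}) = n(g-1)!, and
∫((μ + Nα + N²η)^g) = 0 for all integers N, the top intersection numbers are
forced: ∫(α²μ^{g-2}) = -2n(g-2)! and ∫(α^kμ^{g-k}) = 0 for 1 ≤ k ≤ g, k ≠ 2. -/
theorem stmt_1 (g n : ℕ) (hg : 2 ≤ g) (hn : 0 < n)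
    (I : MvPolynomial (Fin 3) ℚ →ₗ[ℚ] ℚ)
    (hrel_eta : ∀ p, I (et ^ 2 * p) = 0)
    (hrel_aleta : ∀ p, I (al * et * p) = 0)
    (h_eta_mu : I (et * mu ^ (g - 1)) = n * Nat.factorial (g - 1))
    (h_vanish : ∀ N : ℤ, I ((mu + C (N : ℚ) * al + C ((N : ℚ) ^ 2) * et) ^ g) = 0) :
    I (al ^ 2 * mu ^ (g - 2)) = -2 * n * Nat.factorial (g - 2) ∧
      ∀ k : ℕ, 1 ≤ k → k ≤ g → k ≠ 2 → I (al ^ k * mu ^ (g - k)) = 0 := by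
  obtain ⟨m, rfl⟩ : ∃ m, g = m + 2 := ⟨g - 2, by omega⟩
  have h1 : m + 2 - 1 = m + 1 := by omega
  rw [h1] at h_eta_mu
  -- the coefficient function
  set a : ℕ → ℚ := fun k =>
    ((m + 2).choose k : ℚ) * I (al ^ k * mu ^ (m + 2 - k))
      + (if k = 2 then ((m : ℚ) + 2) * (n * Nat.factorial (m + 1)) else 0) with ha
  set q : Polynomial ℚ := ∑ k ∈ Finset.range (m + 3), Polynomial.C (a k) * Polynomial.X ^ k with hqdef
  have hq : ∀ N : ℤ, q.eval (N : ℚ) = 0 := by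
    intro N
    have hv := h_vanish N
    rw [key_eval m n I hrel_eta hrel_aleta h_eta_mu] at hv
    rw [hqdef]
    simp only [Polynomial.eval_finset_sum, Polynomial.eval_mul, Polynomial.eval_C,
      Polynomial.eval_pow, Polynomial.eval_X, ha]
    simp only [add_mul, ite_mul, zero_mul, Finset.sum_add_distrib]
    rw [Finset.sum_ite_eq' (Finset.range (m + 3)) 2]
    simp only [Finset.mem_range, show 2 < m + 3 by omega, if_true]
    linear_combination hv
  have hq0 : q = 0 := by
    apply Polynomial.eq_zero_of_infinite_isRoot
    exact Set.infinite_of_injective_forall_mem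
      (f := fun N : ℤ => (N : ℚ)) (fun a b h => Int.cast_injective h) (fun N => hq N)
  have hcoeff : ∀ j, j < m + 3 → a j = 0 := by
    intro j hj
    have : q.coeff j = a j := by
      rw [hqdef, Polynomial.finset_sum_coeff]
      simp only [Polynomial.coeff_C_mul, Polynomial.coeff_X_pow, mul_ite, mul_one, mul_zero]
      rw [Finset.sum_ite_eq (Finset.range (m + 3)) j]
      simp [hj]
    rw [hq0] at this
    simpa using this.symm
  constructor
  · -- k = 2 case
    have h2 := hcoeff 2 (by omega)
    rw [ha] at h2
    norm_num at h2
    have hch : ((m + 2).choose 2 : ℚ) ≠ 0 := by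
      have := Nat.choose_pos (show 2 ≤ m + 2 by omega)
      positivity
    simp only [show m + 2 - 2 = m from by omega]
    have hfact : ((m + 2).choose 2 : ℚ) * (-2 * n * Nat.factorial m)
        = -(((m : ℚ) + 2) * (n * Nat.factorial (m + 1))) := by
      have hnat : (m + 2).choose 2 * 2 * Nat.factorial m = Nat.factorial (m + 2) := by
        have := Nat.choose_mul_factorial_mul_factorial (show 2 ≤ m + 2 by omega)
        simpa [Nat.factorial] using this
      have hnat2 : Nat.factorial (m + 2) = (m + 2) * Nat.factorial (m + 1) := rfl
      have hcast : ((m + 2).choose 2 : ℚ) * 2 * Nat.factorial m = ((m : ℚ) + 2) * Nat.factorial (m + 1) := by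
        have := congrArg (fun x : ℕ => (x : ℚ)) (hnat.trans hnat2)
        push_cast at this
        linarith [this]
      linear_combination (-(n : ℚ)) * hcast
    -- from h2 : choose * I + extra = 0
    have : ((m + 2).choose 2 : ℚ) * I (al ^ 2 * mu ^ m)
        = ((m + 2).choose 2 : ℚ) * (-2 * n * Nat.factorial m) := by
      rw [hfact]; linarith [h2]
    exact mul_left_cancel₀ hch this
  · intro k hk1 hk2 hkne
    have h2 := hcoeff k (by omega)
    rw [ha] at h2
    simp only [if_neg hkne, add_zero] at h2
    have hch : ((m + 2).choose k : ℚ) ≠ 0 := by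
      have := Nat.choose_pos hk2
      positivity
    exact (mul_eq_zero.mp h2).resolve_left hch
end

section
/- In the model ring of the Poincaré bundle with relations ξ² = -αξ, η² = 0, αη = 0 and integration ημ^{g-1} = n(g-1)!, α²μ^{g-2} = -2n(g-2)!, α^kμ^{g-k} = 0 (k≠2), the condition ∫((μ - α/2 + c_η·η)^g) = 0 forces c_η = 1/4. -/
open MvPolynomial

/-- With the relations η² = 0, αη = 0 and the integration rules
∫(ημ^{g-1}) = n(g-1)!, ∫(α²μ^{g-2}) = -2n(g-2)!, ∫(α^kμ^{g-k}) = 0 for k ≠ 2,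
the vanishing ∫((μ - α/2 + c_η·η)^g) = 0 forces c_η = 1/4. -/
theorem stmt_7 (g n : ℕ) (hg : 2 ≤ g) (hn : 0 < n)
    (I : MvPolynomial (Fin 3) ℚ →ₗ[ℚ] ℚ)
    (hrel_eta : ∀ p, I (et ^ 2 * p) = 0)
    (hrel_aleta : ∀ p, I (al * et * p) = 0)
    (h_eta_mu : I (et * mu ^ (g - 1)) = n * Nat.factorial (g - 1))
    (h_al2 : I (al ^ 2 * mu ^ (g - 2)) = -2 * n * Nat.factorial (g - 2))
    (h_alk : ∀ k : ℕ, k ≤ g → k ≠ 2 → I (al ^ k * mu ^ (g - k)) = 0)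
    (ceta : ℚ)
    (h_vanish : I ((mu - C (1 / 2 : ℚ) * al + C ceta * et) ^ g) = 0) :
    ceta = 1 / 4 := by
  obtain ⟨m, rfl⟩ : ∃ m, g = m + 2 := ⟨g - 2, by omega⟩
  have hIC : ∀ (r : ℚ) (p : MvPolynomial (Fin 3) ℚ), I (C r * p) = r * I p := by
    intro r p
    rw [← smul_eq_C_mul, map_smul, smul_eq_mul]
  have hmf0 : (m.factorial : ℚ) ≠ 0 := Nat.cast_ne_zero.mpr (Nat.factorial_ne_zero m)
  have hsub : mu - C (1/2 : ℚ) * al = mu + C (-(1/2) : ℚ) * al := by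
    rw [map_neg]; ring
  -- I (P ^ (m+2))
  have hA : I ((mu - C (1/2:ℚ) * al) ^ (m+2))
      = ((m+2).choose 2 : ℚ) * ((-(1/2))^2 * (-2 * n * m.factorial)) := by
    rw [hsub, add_pow, map_sum, Finset.sum_eq_single m]
    · have h1 : mu ^ m * (C (-(1/2):ℚ) * al) ^ (m + 2 - m) *
          (((m+2).choose m : ℕ) : MvPolynomial (Fin 3) ℚ)
          = C ((-(1/2):ℚ)^2 * ((m+2).choose m : ℚ)) * (al ^ 2 * mu ^ m) := by
        rw [show m + 2 - m = 2 by omega, map_mul, map_pow,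
          map_natCast (C : ℚ →+* MvPolynomial (Fin 3) ℚ)]
        ring
      rw [show m + 2 - 2 = m by omega] at h_al2
      rw [h1, hIC, h_al2]
      rw [show (m+2).choose m = (m+2).choose 2 by
        rw [← Nat.choose_symm (by omega : 2 ≤ m+2), Nat.add_sub_cancel]]
      ring
    · intro j hj hjm
      have hj' : j ≤ m + 2 := by have := Finset.mem_range.mp hj; omega
      have h1 : mu ^ j * (C (-(1/2):ℚ) * al) ^ (m + 2 - j) *
          (((m+2).choose j : ℕ) : MvPolynomial (Fin 3) ℚ)
          = C ((-(1/2):ℚ)^(m+2-j) * ((m+2).choose j : ℚ)) * (al ^ (m+2-j) * mu ^ j) := by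
        rw [map_mul, map_pow, map_natCast (C : ℚ →+* MvPolynomial (Fin 3) ℚ)]
        ring
      rw [h1, hIC]
      have h2 := h_alk (m+2-j) (by omega) (by omega)
      rw [show m+2-(m+2-j) = j by omega] at h2
      rw [h2, mul_zero]
    · intro h; exact absurd (Finset.mem_range.mpr (by omega)) h
  -- I (P ^ (m+1) * E)
  have hB : I ((mu - C (1/2:ℚ) * al) ^ (m+1) * (C ceta * et))
      = ceta * (n * (m+1).factorial) := by
    rw [hsub, add_pow, Finset.sum_mul, map_sum, Finset.sum_eq_single (m+1)]
    · rw [Nat.sub_self, pow_zero, Nat.choose_self, Nat.cast_one, mul_one, mul_one,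
        show mu ^ (m+1) * (C ceta * et) = C ceta * (et * mu ^ (m+1)) by ring, hIC,
        show m + 2 - 1 = m + 1 by omega] at *
      rw [h_eta_mu]
    · intro j hj hjm
      have hj' : j ≤ m := by have := Finset.mem_range.mp hj; omega
      have h1 : mu ^ j * (C (-(1/2):ℚ) * al) ^ (m + 1 - j) *
          (((m+1).choose j : ℕ) : MvPolynomial (Fin 3) ℚ) * (C ceta * et)
          = al * et * (C ((-(1/2):ℚ)^(m+1-j) * ((m+1).choose j : ℚ) * ceta)
              * (al ^ (m-j) * mu ^ j)) := by
        rw [show m + 1 - j = (m - j) + 1 by omega, map_mul, map_mul, map_pow,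
          map_natCast (C : ℚ →+* MvPolynomial (Fin 3) ℚ)]
        ring
      rw [h1, hrel_aleta]
    · intro h; exact absurd (Finset.mem_range.mpr (by omega)) h
  -- expand the vanishing condition
  rw [add_pow, map_sum, Finset.sum_range_succ, Finset.sum_range_succ] at h_vanish
  have hzero : ∀ k ∈ Finset.range (m+1),
      I ((mu - C (1/2:ℚ) * al) ^ k * (C ceta * et) ^ (m + 2 - k) *
        (((m+2).choose k : ℕ) : MvPolynomial (Fin 3) ℚ)) = 0 := by
    intro k hk
    have hk' : k ≤ m := by have := Finset.mem_range.mp hk; omega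
    have h1 : (mu - C (1/2:ℚ) * al) ^ k * (C ceta * et) ^ (m + 2 - k) *
          (((m+2).choose k : ℕ) : MvPolynomial (Fin 3) ℚ)
        = et ^ 2 * ((mu - C (1/2:ℚ) * al) ^ k * (C ceta * et) ^ (m - k) * C ceta * C ceta *
          (((m+2).choose k : ℕ) : MvPolynomial (Fin 3) ℚ)) := by
      rw [show m + 2 - k = (m - k) + 2 by omega]
      ring
    rw [h1, hrel_eta]
  rw [Finset.sum_eq_zero hzero, show m + 2 - (m+1) = 1 by omega, pow_one,
    Nat.choose_succ_self_right, Nat.sub_self, pow_zero, mul_one, Nat.choose_self,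
    Nat.cast_one, mul_one,
    show (mu - C (1/2:ℚ) * al) ^ (m+1) * (C ceta * et) * ((m+1+1 : ℕ) : MvPolynomial (Fin 3) ℚ)
      = C ((m+1+1 : ℕ) : ℚ) * ((mu - C (1/2:ℚ) * al) ^ (m+1) * (C ceta * et)) by
        rw [map_natCast (C : ℚ →+* MvPolynomial (Fin 3) ℚ)]; ring,
    hIC, hB, hA] at h_vanish
  -- arithmetic
  have hch : ((m+2).choose 2 : ℚ) * 2 * (m.factorial : ℚ) = ((m+2).factorial : ℚ) := by
    have h := Nat.choose_mul_factorial_mul_factorial (show 2 ≤ m + 2 by omega)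
    rw [show m + 2 - 2 = m by omega] at h
    have := congrArg (fun x : ℕ => (x : ℚ)) h
    push_cast at this ⊢
    rw [Nat.factorial_two] at this
    push_cast at this
    linarith [this]
  have hf2 : ((m+2).factorial : ℚ) = (m+2) * (m+1) * m.factorial := by
    rw [show m + 2 = (m+1) + 1 by ring, Nat.factorial_succ, Nat.factorial_succ]
    push_cast; ring
  have hf1 : ((m+1).factorial : ℚ) = (m+1) * m.factorial := by
    rw [Nat.factorial_succ]; push_cast; ring
  have hc2 : ((m+2).choose 2 : ℚ) * 2 = ((m:ℚ)+2) * ((m:ℚ)+1) := by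
    rw [hf2] at hch
    exact mul_right_cancel₀ hmf0 (by linear_combination hch)
  rw [hf1] at h_vanish
  have hn' : (0:ℚ) < n := by exact_mod_cast hn
  have hmf : (0:ℚ) < (m.factorial : ℚ) := by exact_mod_cast m.factorial_pos
  have key : (ceta - 1/4) * (((m:ℚ)+2) * ((m:ℚ)+1) * n * m.factorial) = 0 := by
    push_cast at h_vanish ⊢
    linear_combination h_vanish + ((n:ℚ) * (m.factorial:ℚ) / 4) * hc2
  rcases mul_eq_zero.mp key with h | h
  · linarith
  · exfalso
    have : (0:ℚ) < ((m:ℚ)+2) * ((m:ℚ)+1) * n * m.factorial := by positivity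
    linarith
end
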